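/- Let (a_n) be a positive increasing sequence with a_{n-1}/a_n = O(n^{-σ}) for some σ > 0, let C > 0 be a real constant and P a polynomial with positive coefficients. Then for any fixed n₀, ∑_{k=n₀}^{n} C^k P(k) a_{n-k} = O(a_{n-n₀}) as n → ∞. -/

import Mathlib

open Filter Asymptotics Finset

/-- ∑_{k=n₀}^n C^k P(k) a_{n-k} = O(a_{n-n₀}) for a positive
increasing rapidly growing sequence a and a polynomial P with nonnegative
coefficients. -/
theorem geometric_poly_convolution_isBigO
    (a : ℕ → ℝ) (σ : ℝ) (hσ : 0 < σ)
    (hpos : ∀ n, 0 < a n) (hmono : Monotone a)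
    (hr : (fun n => a (n - 1) / a n) =O[atTop] fun n => (n : ℝ) ^ (-σ))
    (C : ℝ) (hC : 0 < C) (P : Polynomial ℝ) (hP : ∀ i, 0 ≤ P.coeff i)
    (n₀ : ℕ) :
    (fun n => ∑ k ∈ Finset.Icc n₀ n, C ^ k * P.eval (k : ℝ) * a (n - k))
      =O[atTop] fun n => a (n - n₀) := by
  set d := P.natDegree with hd
  set S : ℝ := ∑ i ∈ Finset.range (d + 1), P.coeff i with hSdef
  have hS : 0 ≤ S := Finset.sum_nonneg fun i _ => hP i
  set B : ℝ := 2 ^ d with hBdef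
  have hB1 : (1:ℝ) ≤ B := one_le_pow₀ (by norm_num)
  have hB0 : (0:ℝ) < B := by linarith
  set Q : ℝ := C * B with hQdef
  have hQ0 : 0 < Q := mul_pos hC hB0
  set Q' : ℝ := Q + 1 with hQ'def
  have hQ'1 : (1:ℝ) ≤ Q' := by linarith
  have hQ'0 : (0:ℝ) < Q' := by linarith
  set ε : ℝ := 1 / (2 * Q') with hεdef
  have hε0 : 0 < ε := by positivity
  have hεQ' : ε * Q' = 1/2 := by
    rw [hεdef]; field_simp
  have hεQ : ε * Q ≤ 1/2 := by nlinarith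
  -- polynomial bound: P(k) ≤ S * B^k
  have hkpow : ∀ k i : ℕ, i ≤ d → ((k:ℝ))^i ≤ B ^ k := by
    intro k i hi
    rcases Nat.eq_zero_or_pos k with hk | hk
    · subst hk
      rcases Nat.eq_zero_or_pos i with hi0 | hi0
      · subst hi0; simp
      · push_cast
        rw [zero_pow (show i ≠ 0 by omega)]
        positivity
    · have hk1 : (1:ℝ) ≤ (k:ℝ) := by exact_mod_cast hk
      have h1 : ((k:ℝ))^i ≤ ((k:ℝ))^d := pow_le_pow_right₀ hk1 hi
      have hk2 : (k:ℝ) ≤ 2 ^ k := by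
        exact_mod_cast (Nat.lt_two_pow_self (n := k)).le
      have h2 : ((k:ℝ))^d ≤ ((2:ℝ)^k)^d := pow_le_pow_left₀ (by positivity) hk2 d
      calc ((k:ℝ))^i ≤ ((k:ℝ))^d := h1
        _ ≤ ((2:ℝ)^k)^d := h2
        _ = B ^ k := by rw [hBdef, ← pow_mul, ← pow_mul, Nat.mul_comm]
  have hPoly : ∀ k : ℕ, P.eval (k:ℝ) ≤ S * B ^ k := by
    intro k
    rw [Polynomial.eval_eq_sum_range]
    calc ∑ i ∈ range (d+1), P.coeff i * (k:ℝ)^i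
        ≤ ∑ i ∈ range (d+1), P.coeff i * B ^ k := by
          apply Finset.sum_le_sum
          intro i hi
          exact mul_le_mul_of_nonneg_left (hkpow k i (by simpa [Nat.lt_succ_iff] using hi)) (hP i)
      _ = S * B ^ k := by rw [← Finset.sum_mul]
  have hPnn : ∀ k : ℕ, 0 ≤ P.eval (k:ℝ) := by
    intro k
    rw [Polynomial.eval_eq_sum_range]
    exact Finset.sum_nonneg fun i _ => mul_nonneg (hP i) (by positivity)
  -- eventually small ratio
  have htend : Tendsto (fun n => a (n-1) / a n) atTop (nhds 0) :=
    hr.trans_tendsto ((tendsto_rpow_neg_atTop hσ).comp tendsto_natCast_atTop_atTop)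
  obtain ⟨N, hN⟩ := Filter.eventually_atTop.1 (htend.eventually_lt_const hε0)
  have hNstep : ∀ m, N ≤ m → a m ≤ ε * a (m + 1) := by
    intro m hm
    have h := hN (m + 1) (by omega)
    simp only [Nat.add_sub_cancel] at h
    have := (div_lt_iff₀ (hpos (m+1))).1 h
    linarith
  have hdecay : ∀ m, N ≤ m → ∀ t, a m ≤ ε ^ t * a (m + t) := by
    intro m hm t
    induction t with
    | zero => simp
    | succ t ih =>
      calc a m ≤ ε ^ t * a (m + t) := ih
        _ ≤ ε ^ t * (ε * a (m + t + 1)) := by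
            have := hNstep (m + t) (by omega)
            exact mul_le_mul_of_nonneg_left this (by positivity)
        _ = ε ^ (t+1) * a (m + (t+1)) := by ring_nf
  -- geometric sum bound
  have hgeo : ∀ t : ℕ, ∑ j ∈ range t, (1/2:ℝ)^j ≤ 2 := by
    intro t
    rw [geom_sum_eq (by norm_num), div_le_iff_of_neg (by norm_num)]
    have : (0:ℝ) ≤ (1/2)^t := by positivity
    linarith
  have hhalf : ∀ k, n₀ ≤ k → ((1:ℝ)/2)^(k - n₀) = 2^n₀ * (1/2)^k := by
    intro k hk
    obtain ⟨j, rfl⟩ := Nat.exists_eq_add_of_le hk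
    rw [Nat.add_sub_cancel_left, pow_add, ← mul_assoc, ← mul_pow]
    norm_num
  rw [isBigO_iff]
  refine ⟨2 * (S * Q'^n₀ * 2^n₀) + N * (S * Q'^(n₀+N)), ?_⟩
  filter_upwards [eventually_ge_atTop (N + n₀)] with n hn
  have hnn₀ : n₀ ≤ n := by omega
  have hnN : N ≤ n - n₀ := by omega
  have hterm_nn : ∀ k ∈ Finset.Icc n₀ n, 0 ≤ C ^ k * P.eval (k:ℝ) * a (n - k) := by
    intro k _
    have := hPnn k
    have := (hpos (n-k)).le
    positivity
  rw [Real.norm_eq_abs, Real.norm_eq_abs, abs_of_nonneg (Finset.sum_nonneg hterm_nn),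
    abs_of_nonneg (hpos _).le]
  -- split the sum
  have hsub : Finset.Icc n₀ n ⊆ Finset.Icc n₀ (n - N) ∪ Finset.Ioc (n - N) n := by
    intro x hx
    simp only [Finset.mem_Icc, Finset.mem_union, Finset.mem_Ioc] at *
    omega
  have hdisj : Disjoint (Finset.Icc n₀ (n - N)) (Finset.Ioc (n - N) n) := by
    rw [Finset.disjoint_left]
    intro x hx hx'
    simp only [Finset.mem_Icc, Finset.mem_Ioc] at *
    omega
  have hsplit : ∑ k ∈ Finset.Icc n₀ n, C ^ k * P.eval (k:ℝ) * a (n - k)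
      ≤ (∑ k ∈ Finset.Icc n₀ (n - N), C ^ k * P.eval (k:ℝ) * a (n - k))
        + ∑ k ∈ Finset.Ioc (n - N) n, C ^ k * P.eval (k:ℝ) * a (n - k) := by
    rw [← Finset.sum_union hdisj]
    apply Finset.sum_le_sum_of_subset_of_nonneg hsub
    intro k _ _
    have := hPnn k
    have := (hpos (n-k)).le
    positivity
  -- head bound
  have hhead : ∑ k ∈ Finset.Icc n₀ (n - N), C ^ k * P.eval (k:ℝ) * a (n - k)
      ≤ 2 * (S * Q'^n₀ * 2^n₀) * a (n - n₀) := by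
    have hterm : ∀ k ∈ Finset.Icc n₀ (n - N),
        C ^ k * P.eval (k:ℝ) * a (n - k) ≤ (S * Q'^n₀ * 2^n₀ * a (n - n₀)) * (1/2)^k := by
      intro k hk
      simp only [Finset.mem_Icc] at hk
      obtain ⟨hk1, hk2⟩ := hk
      have hkn : k ≤ n := by omega
      have hNnk : N ≤ n - k := by omega
      have hdec : a (n - k) ≤ ε ^ (k - n₀) * a (n - n₀) := by
        have := hdecay (n - k) hNnk (k - n₀)
        rwa [show n - k + (k - n₀) = n - n₀ from by omega] at this
      calc C ^ k * P.eval (k:ℝ) * a (n - k)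
          ≤ C ^ k * (S * B ^ k) * (ε ^ (k - n₀) * a (n - n₀)) := by
            apply mul_le_mul
            · exact mul_le_mul_of_nonneg_left (hPoly k) (by positivity)
            · exact hdec
            · exact (hpos _).le
            · have := hPnn k; positivity
        _ = S * (Q ^ k * ε ^ (k - n₀)) * a (n - n₀) := by
            rw [hQdef, mul_pow]; ring
        _ ≤ S * (Q'^n₀ * (2^n₀ * (1/2)^k)) * a (n - n₀) := by
            have key : Q ^ k * ε ^ (k - n₀) ≤ Q'^n₀ * (2^n₀ * (1/2)^k) := by
              have e1 : Q ^ k = Q ^ n₀ * Q ^ (k - n₀) := by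
                rw [← pow_add]; congr 1; omega
              have e2 : Q ^ k * ε ^ (k - n₀) = Q ^ n₀ * (Q * ε) ^ (k - n₀) := by
                rw [e1, mul_pow]; ring
              rw [e2]
              have h3 : (Q * ε) ^ (k - n₀) ≤ (1/2:ℝ) ^ (k - n₀) :=
                pow_le_pow_left₀ (by positivity) (by linarith [hεQ, mul_comm Q ε]) _
              calc Q ^ n₀ * (Q * ε) ^ (k - n₀) ≤ Q'^n₀ * (1/2:ℝ) ^ (k - n₀) := by
                    apply mul_le_mul
                    · exact pow_le_pow_left₀ hQ0.le (by linarith) _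
                    · exact h3
                    · positivity
                    · positivity
                _ = Q'^n₀ * (2^n₀ * (1/2)^k) := by rw [hhalf k hk1]
            apply mul_le_mul_of_nonneg_right _ (hpos _).le
            exact mul_le_mul_of_nonneg_left key hS
        _ = (S * Q'^n₀ * 2^n₀ * a (n - n₀)) * (1/2)^k := by ring
    calc ∑ k ∈ Finset.Icc n₀ (n - N), C ^ k * P.eval (k:ℝ) * a (n - k)
        ≤ ∑ k ∈ Finset.Icc n₀ (n - N), (S * Q'^n₀ * 2^n₀ * a (n - n₀)) * (1/2)^k :=
          Finset.sum_le_sum hterm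
      _ = (S * Q'^n₀ * 2^n₀ * a (n - n₀)) * ∑ k ∈ Finset.Icc n₀ (n - N), (1/2:ℝ)^k := by
          rw [Finset.mul_sum]
      _ ≤ (S * Q'^n₀ * 2^n₀ * a (n - n₀)) * 2 := by
          apply mul_le_mul_of_nonneg_left _ (by have := (hpos (n - n₀)).le; positivity)
          calc ∑ k ∈ Finset.Icc n₀ (n - N), (1/2:ℝ)^k
              ≤ ∑ k ∈ Finset.range (n + 1), (1/2:ℝ)^k := by
                apply Finset.sum_le_sum_of_subset_of_nonneg
                · intro x hx
                  simp only [Finset.mem_Icc, Finset.mem_range] at *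
                  omega
                · intro k _ _; positivity
            _ ≤ 2 := hgeo (n + 1)
      _ = 2 * (S * Q'^n₀ * 2^n₀) * a (n - n₀) := by ring
  -- tail bound
  have htail : ∑ k ∈ Finset.Ioc (n - N) n, C ^ k * P.eval (k:ℝ) * a (n - k)
      ≤ N * (S * Q'^(n₀+N)) * a (n - n₀) := by
    have haN : a N ≤ ε ^ (n - n₀ - N) * a (n - n₀) := by
      have := hdecay N le_rfl (n - n₀ - N)
      rwa [show N + (n - n₀ - N) = n - n₀ from by omega] at this
    have hterm : ∀ k ∈ Finset.Ioc (n - N) n,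
        C ^ k * P.eval (k:ℝ) * a (n - k) ≤ S * Q'^(n₀+N) * a (n - n₀) := by
      intro k hk
      simp only [Finset.mem_Ioc] at hk
      obtain ⟨hk1, hk2⟩ := hk
      have hnk : n - k ≤ N := by omega
      calc C ^ k * P.eval (k:ℝ) * a (n - k)
          ≤ C ^ k * (S * B ^ k) * a N := by
            apply mul_le_mul
            · exact mul_le_mul_of_nonneg_left (hPoly k) (by positivity)
            · exact hmono hnk
            · exact (hpos _).le
            · have := hPnn k; positivity
        _ = S * Q ^ k * a N := by rw [hQdef, mul_pow]; ring
        _ ≤ S * Q'^n * (ε ^ (n - n₀ - N) * a (n - n₀)) := by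
            apply mul_le_mul
            · apply mul_le_mul_of_nonneg_left _ hS
              calc Q ^ k ≤ Q' ^ k := pow_le_pow_left₀ hQ0.le (by linarith) _
                _ ≤ Q' ^ n := pow_le_pow_right₀ hQ'1 hk2
            · exact haN
            · exact (hpos _).le
            · positivity
        _ = S * (Q'^n * ε ^ (n - n₀ - N)) * a (n - n₀) := by ring
        _ ≤ S * Q'^(n₀+N) * a (n - n₀) := by
            apply mul_le_mul_of_nonneg_right _ (hpos _).le
            apply mul_le_mul_of_nonneg_left _ hS
            have e1 : Q' ^ n = Q' ^ (n₀ + N) * Q' ^ (n - n₀ - N) := by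
              rw [← pow_add]; congr 1; omega
            have e2 : Q'^n * ε ^ (n - n₀ - N) = Q' ^ (n₀ + N) * (Q' * ε) ^ (n - n₀ - N) := by
              rw [e1, mul_pow]; ring
            rw [e2]
            have h3 : (Q' * ε) ^ (n - n₀ - N) ≤ 1 := by
              apply pow_le_one₀ (by positivity)
              rw [mul_comm, hεQ']; norm_num
            calc Q' ^ (n₀ + N) * (Q' * ε) ^ (n - n₀ - N) ≤ Q' ^ (n₀ + N) * 1 :=
                  mul_le_mul_of_nonneg_left h3 (by positivity)
              _ = Q' ^ (n₀ + N) := mul_one _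
    calc ∑ k ∈ Finset.Ioc (n - N) n, C ^ k * P.eval (k:ℝ) * a (n - k)
        ≤ ∑ _k ∈ Finset.Ioc (n - N) n, S * Q'^(n₀+N) * a (n - n₀) :=
          Finset.sum_le_sum hterm
      _ = (Finset.Ioc (n - N) n).card * (S * Q'^(n₀+N) * a (n - n₀)) := by
          rw [Finset.sum_const, nsmul_eq_mul]
      _ = N * (S * Q'^(n₀+N)) * a (n - n₀) := by
          rw [Nat.card_Ioc, show n - (n - N) = N from by omega]; ring
  calc ∑ k ∈ Finset.Icc n₀ n, C ^ k * P.eval (k:ℝ) * a (n - k)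
      ≤ (∑ k ∈ Finset.Icc n₀ (n - N), C ^ k * P.eval (k:ℝ) * a (n - k))
        + ∑ k ∈ Finset.Ioc (n - N) n, C ^ k * P.eval (k:ℝ) * a (n - k) := hsplit
    _ ≤ 2 * (S * Q'^n₀ * 2^n₀) * a (n - n₀) + N * (S * Q'^(n₀+N)) * a (n - n₀) := by
        exact add_le_add hhead htail
    _ = (2 * (S * Q'^n₀ * 2^n₀) + N * (S * Q'^(n₀+N))) * a (n - n₀) := by ring
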